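/- Let N ≥ n_x be positive integers, A ∈ ℝ^{n_x×n_x}, B ∈ ℝ^{n_x×n_u}, let ξ ∈ ℝ^{n_u} be a unit vector, 0 < γ < 1, 0 < ρ_min ≤ ρ_max, and let M ∈ ℝ^{n_u×(n_u−1)} be a matrix whose columns form a basis of {v ∈ ℝ^{n_u} : ⟪ξ, v⟫ = 0}. Assume that for every choice of n_x distinct indices P₁, …, P_{n_x} ∈ {1, …, N}, the block matrix [A^{N−P₁}BM, …, A^{N−P_{n_x}}BM] has rank n_x. Let η ∈ ℝ^{n_x} be nonzero, and let σ₁, …, σ_N ∈ [ρ_min, ρ_max] and u₁, …, u_N ∈ ℝ^{n_u} satisfy, for every i ∈ {1, …, N}: uᵢ ∈ V(σᵢ) and −Bᵀ(Aᵀ)^{N−i}η ∈ N_{V(σᵢ)}(uᵢ). Then the number of indices i ∈ {1, …, N} at which the nonconvex constraints fail, i.e. at which it is NOT the case that (ρ_min ≤ ‖uᵢ‖ ≤ ρ_max and ⟪ξ, uᵢ⟫ ≥ γ‖uᵢ‖), is at most n_x − 1. -/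

import Mathlib

open RealInnerProductSpace Matrix

open scoped Classical

/-- Identification of a plain vector in `Fin n → ℝ` with a point of Euclidean space. -/
noncomputable def toE {n : ℕ} (v : Fin n → ℝ) : EuclideanSpace ℝ (Fin n) :=
  (EuclideanSpace.equiv (Fin n) ℝ).symm v

/-- The spherical cap `V(σ) = {u : ‖u‖ ≤ σ ∧ ⟪ξ, u⟫ ≥ γσ}`. -/
def cap {nu : ℕ} (ξ : EuclideanSpace ℝ (Fin nu)) (γ σ : ℝ) :
    Set (EuclideanSpace ℝ (Fin nu)) :=
  {w : EuclideanSpace ℝ (Fin nu) | ‖w‖ ≤ σ ∧ γ * σ ≤ ⟪ξ, w⟫}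

/-- under the strengthened controllability condition, the number of time grid
points `i ∈ {1, …, N}` at which the nonconvex constraints
`ρmin ≤ ‖uᵢ‖ ≤ ρmax ∧ ⟪ξ, uᵢ⟫ ≥ γ‖uᵢ‖` fail is at most `n_x − 1`, provided
`uᵢ ∈ V(σᵢ)` and `−Bᵀ(Aᵀ)^{N−i}η ∈ N_{V(σᵢ)}(uᵢ)` for each `i`. -/
theorem stmt_12 (nx nu N : ℕ) (hnx : 0 < nx) (hN : nx ≤ N)
    (A : Matrix (Fin nx) (Fin nx) ℝ) (B : Matrix (Fin nx) (Fin nu) ℝ)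
    (ξ : EuclideanSpace ℝ (Fin nu)) (hξ : ‖ξ‖ = 1)
    (γ ρmin ρmax : ℝ) (hγ0 : 0 < γ) (hγ1 : γ < 1) (hρ0 : 0 < ρmin) (hρ : ρmin ≤ ρmax)
    (M : Matrix (Fin nu) (Fin (nu - 1)) ℝ)
    (hindep : LinearIndependent ℝ (fun j : Fin (nu - 1) => toE (Mᵀ j)))
    (hspan : (Submodule.span ℝ (Set.range fun j : Fin (nu - 1) => toE (Mᵀ j)) : Set _) =
      {v : EuclideanSpace ℝ (Fin nu) | ⟪ξ, v⟫ = 0})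
    (hrank : ∀ P : Fin nx → ℕ, (∀ j, P j ∈ Finset.Icc 1 N) → Function.Injective P →
      (Matrix.of fun r (p : Fin nx × Fin (nu - 1)) =>
        (A ^ (N - P p.1) * B * M) r p.2).rank = nx)
    (η : Fin nx → ℝ) (hη : η ≠ 0)
    (σ : ℕ → ℝ) (u : ℕ → EuclideanSpace ℝ (Fin nu))
    (hσ : ∀ i ∈ Finset.Icc 1 N, σ i ∈ Set.Icc ρmin ρmax)
    (hu : ∀ i ∈ Finset.Icc 1 N, u i ∈ cap ξ γ (σ i))
    (hnc : ∀ i ∈ Finset.Icc 1 N, ∀ y ∈ cap ξ γ (σ i),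
      ⟪-toE ((Bᵀ * (Aᵀ) ^ (N - i)) *ᵥ η), y - u i⟫ ≤ 0) :
    ((Finset.Icc 1 N).filter fun i =>
      ¬(ρmin ≤ ‖u i‖ ∧ ‖u i‖ ≤ ρmax ∧ γ * ‖u i‖ ≤ ⟪ξ, u i⟫)).card ≤ nx - 1 := by
  set F := (Finset.Icc 1 N).filter fun i =>
      ¬(ρmin ≤ ‖u i‖ ∧ ‖u i‖ ≤ ρmax ∧ γ * ‖u i‖ ≤ ⟪ξ, u i⟫) with hFdef
  -- key orthogonality at each failing index
  have key : ∀ i ∈ F, ∀ j : Fin (nu - 1),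
      ((Bᵀ * (Aᵀ) ^ (N - i)) *ᵥ η) ⬝ᵥ (Mᵀ j) = 0 := by
    intro i hi j
    rw [hFdef, Finset.mem_filter] at hi
    obtain ⟨hiIcc, hfail⟩ := hi
    obtain ⟨hu1, hu2⟩ := hu i hiIcc
    obtain ⟨hσ1, hσ2⟩ := hσ i hiIcc
    have hun : 0 ≤ ‖u i‖ := norm_nonneg _
    have hlt : ‖u i‖ < ρmin := by
      by_contra h
      push_neg at h
      exact hfail ⟨h, le_trans hu1 hσ2, le_trans (by nlinarith) hu2⟩
    have hltσ : ‖u i‖ < σ i := lt_of_lt_of_le hlt hσ1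
    set m := toE (Mᵀ j) with hm
    have hξm : ⟪ξ, m⟫ = 0 := by
      have hmem : m ∈ (Submodule.span ℝ
          (Set.range fun j : Fin (nu - 1) => toE (Mᵀ j)) : Set _) :=
        Submodule.subset_span ⟨j, rfl⟩
      rw [hspan] at hmem
      exact hmem
    set ε := (σ i - ‖u i‖) / (‖m‖ + 1) with hε
    have hmn : 0 ≤ ‖m‖ := norm_nonneg _
    have hε0 : 0 < ε := div_pos (by linarith) (by linarith)
    have hεm : ε * ‖m‖ ≤ σ i - ‖u i‖ := by
      rw [hε, div_mul_eq_mul_div, div_le_iff₀ (by linarith)]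
      nlinarith
    have hcapmem : ∀ t : ℝ, |t| = ε → u i + t • m ∈ cap ξ γ (σ i) := by
      intro t ht
      constructor
      · calc ‖u i + t • m‖ ≤ ‖u i‖ + ‖t • m‖ := norm_add_le _ _
          _ = ‖u i‖ + ε * ‖m‖ := by rw [norm_smul, Real.norm_eq_abs, ht]
          _ ≤ σ i := by linarith
      · rw [inner_add_right, inner_smul_right, hξm]
        simpa using hu2
    have h1 := hnc i hiIcc _ (hcapmem ε (abs_of_pos hε0))
    have h2 := hnc i hiIcc _ (hcapmem (-ε) (by rw [abs_neg, abs_of_pos hε0]))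
    rw [add_sub_cancel_left, real_inner_smul_right] at h1 h2
    have hz : ⟪-toE ((Bᵀ * (Aᵀ) ^ (N - i)) *ᵥ η), m⟫ = 0 := by nlinarith
    have hz' : ⟪toE ((Bᵀ * (Aᵀ) ^ (N - i)) *ᵥ η), m⟫ = 0 := by
      rw [inner_neg_left] at hz; linarith
    rw [hm] at hz'
    simpa [toE, PiLp.inner_apply, dotProduct, mul_comm] using hz'
  -- counting argument
  by_contra hcard
  push_neg at hcard
  have hnxF : nx ≤ F.card := by omega
  obtain ⟨s, hsF, hscard⟩ := Finset.exists_subset_card_eq hnxF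
  set P : Fin nx → ℕ := fun j => ((s.orderIsoOfFin hscard) j : ℕ) with hP
  have hPmemF : ∀ j, P j ∈ F := fun j => hsF (s.orderIsoOfFin hscard j).2
  have hPicc : ∀ j, P j ∈ Finset.Icc 1 N := by
    intro j
    have := hPmemF j
    rw [hFdef, Finset.mem_filter] at this
    exact this.1
  have hPinj : Function.Injective P := fun a b h =>
    (s.orderIsoOfFin hscard).injective (Subtype.ext h)
  have hr := hrank P hPicc hPinj
  set C : Matrix (Fin nx) (Fin nx × Fin (nu - 1)) ℝ :=
    Matrix.of fun r (p : Fin nx × Fin (nu - 1)) => (A ^ (N - P p.1) * B * M) r p.2 with hC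
  have hsurj : LinearMap.range C.mulVecLin = ⊤ := by
    apply Submodule.eq_top_of_finrank_eq
    rw [Module.finrank_pi]
    simpa [Matrix.rank] using hr
  obtain ⟨x, hx⟩ := LinearMap.range_eq_top.mp hsurj η
  have hvC : η ᵥ* C = 0 := by
    funext p
    have hk := key (P p.1) (hPmemF p.1) p.2
    have he : Bᵀ * (Aᵀ) ^ (N - P p.1) = (A ^ (N - P p.1) * B)ᵀ := by
      rw [Matrix.transpose_mul, Matrix.transpose_pow]
    rw [he, Matrix.mulVec_transpose] at hk
    have hk2 : ((η ᵥ* (A ^ (N - P p.1) * B)) ᵥ* M) p.2 = 0 := by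
      rw [← hk]
      simp [Matrix.vecMul, dotProduct, mul_comm]
    rw [Matrix.vecMul_vecMul] at hk2
    have : (η ᵥ* C) p = (η ᵥ* (A ^ (N - P p.1) * B * M)) p.2 := by
      simp [Matrix.vecMul, dotProduct, hC]
    rw [this, hk2]
    simp
  rw [Matrix.mulVecLin_apply] at hx
  have hd := Matrix.dotProduct_mulVec η C x
  rw [hvC, hx] at hd
  have hηη : η ⬝ᵥ η = 0 := by rw [hd]; simp
  exact hη (dotProduct_self_eq_zero.mp hηη)
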